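/- Consider n agents whose closed-loop dynamics are q̈_i(t) = −k q̇_i(t) − Σ_{j=1}^n a_{ij}(t)(q_i(t) − q_j(t)) − (q_i(t) − P_{X_i}(q_i(t))), q_i(t) ∈ ℝ^m, where X_1, …, X_n are closed convex sets with X₀ = ∩_{i=1}^n X_i nonempty, q₀ ∈ X₀, the measurable weights satisfy a_{ij}(t) = a_{ji}(t) and 0 ≤ a_{ij}(t) ≤ a^*, and k > 2 + (n−1)a^*/2. Define V(t) = (1/2) Σ_i ‖q̇_i(t)‖² + Σ_i ⟨q_i(t) − q₀, q̇_i(t)⟩ + (k/2) Σ_i ‖q_i(t) − q₀‖² + (1/2) Σ_i ‖q_i(t) − P_{X_i}(q_i(t))‖². Then along every C² solution, at every time t, dV/dt ≤ −Σ_{i=1}^n ‖q_i(t)‖²_{X_i} − Σ_{i=1}^n ‖q̇_i(t)‖² ≤ 0. -/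

import Mathlib

open scoped RealInnerProductSpace BigOperators


variable {F : Type*} [NormedAddCommGroup F] [InnerProductSpace ℝ F]

lemma proj_norm_eq_iInf {S : Set F} {p x : F} (hpS : p ∈ S)
    (hmin : ∀ y ∈ S, ‖x - p‖ ≤ ‖x - y‖) : ‖x - p‖ = ⨅ w : S, ‖x - w‖ := by
  have : Nonempty S := ⟨⟨p, hpS⟩⟩
  refine le_antisymm (le_ciInf fun w => hmin w w.2) ?_
  refine ciInf_le ?_ (⟨p, hpS⟩ : S)
  refine ⟨0, fun b hb => ?_⟩
  obtain ⟨w, rfl⟩ := hb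
  positivity

lemma proj_varineq {S : Set F} (hS : Convex ℝ S) {p x : F} (hpS : p ∈ S)
    (hmin : ∀ y ∈ S, ‖x - p‖ ≤ ‖x - y‖) : ∀ y ∈ S, ⟪x - p, y - p⟫ ≤ 0 :=
  (norm_eq_iInf_iff_real_inner_le_zero hS hpS).mp (proj_norm_eq_iInf hpS hmin)

lemma proj_nonexpansive {S : Set F} (hS : Convex ℝ S) {p₁ p₂ x₁ x₂ : F}
    (hp₁ : p₁ ∈ S) (hp₂ : p₂ ∈ S)
    (hmin₁ : ∀ y ∈ S, ‖x₁ - p₁‖ ≤ ‖x₁ - y‖) (hmin₂ : ∀ y ∈ S, ‖x₂ - p₂‖ ≤ ‖x₂ - y‖) :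
    ‖p₁ - p₂‖ ≤ ‖x₁ - x₂‖ := by
  have h1 := proj_varineq hS hp₁ hmin₁ p₂ hp₂
  have h2 := proj_varineq hS hp₂ hmin₂ p₁ hp₁
  have key : ‖p₁ - p₂‖ ^ 2 ≤ ⟪x₁ - x₂, p₁ - p₂⟫ := by
    have e : ⟪x₁ - x₂, p₁ - p₂⟫ - ‖p₁ - p₂‖ ^ 2
        = -⟪x₁ - p₁, p₂ - p₁⟫ - ⟪x₂ - p₂, p₁ - p₂⟫ := by
      rw [← real_inner_self_eq_norm_sq]
      simp only [inner_sub_left, inner_sub_right]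
      ring
    nlinarith [h1, h2]
  have cs := real_inner_le_norm (x₁ - x₂) (p₁ - p₂)
  nlinarith [norm_nonneg (p₁ - p₂), norm_nonneg (x₁ - x₂)]

lemma proj_norm_eq_infDist {S : Set F} {p x : F} (hpS : p ∈ S)
    (hmin : ∀ y ∈ S, ‖x - p‖ ≤ ‖x - y‖) : ‖x - p‖ = Metric.infDist x S := by
  rw [Metric.infDist_eq_iInf, proj_norm_eq_iInf hpS hmin]
  congr 1; ext w; rw [dist_eq_norm]

lemma hasFDerivAt_sq_dist_proj {S : Set F} (hS : Convex ℝ S) (P : F → F)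
    (hPmem : ∀ x, P x ∈ S) (hPproj : ∀ x, ∀ y ∈ S, ‖x - P x‖ ≤ ‖x - y‖) (x₀ : F) :
    HasFDerivAt (fun x => ‖x - P x‖ ^ 2) ((2 : ℝ) • (innerSL ℝ (x₀ - P x₀))) x₀ := by
  rw [hasFDerivAt_iff_isLittleO_nhds_zero]
  have key : ∀ h : F, ‖‖x₀ + h - P (x₀ + h)‖ ^ 2 - ‖x₀ - P x₀‖ ^ 2
      - ((2 : ℝ) • (innerSL ℝ (x₀ - P x₀))) h‖ ≤ 5 * ‖h‖ ^ 2 := by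
    intro h
    set u := x₀ - P x₀ with hu
    set w := x₀ + h - P (x₀ + h) with hw
    have hub : ‖w‖ ^ 2 ≤ ‖u + h‖ ^ 2 := by
      have h1 : ‖w‖ ≤ ‖x₀ + h - P x₀‖ := hPproj (x₀ + h) (P x₀) (hPmem x₀)
      have h2 : x₀ + h - P x₀ = u + h := by rw [hu]; abel
      rw [← h2]
      exact pow_le_pow_left₀ (norm_nonneg _) h1 2
    have hlb : ‖u‖ ^ 2 ≤ ‖w - h‖ ^ 2 := by
      have h1 : ‖u‖ ≤ ‖x₀ - P (x₀ + h)‖ := hPproj x₀ (P (x₀ + h)) (hPmem (x₀ + h))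
      have h2 : x₀ - P (x₀ + h) = w - h := by rw [hw]; abel
      rw [← h2]
      exact pow_le_pow_left₀ (norm_nonneg _) h1 2
    have hne : ‖P (x₀ + h) - P x₀‖ ≤ ‖h‖ := by
      have := proj_nonexpansive hS (hPmem (x₀ + h)) (hPmem x₀)
        (hPproj (x₀ + h)) (hPproj x₀)
      calc ‖P (x₀ + h) - P x₀‖ ≤ ‖x₀ + h - x₀‖ := this
        _ = ‖h‖ := by rw [add_sub_cancel_left]
    have ewu : w - u = h - (P (x₀ + h) - P x₀) := by rw [hw, hu]; abel
    have hwu : ‖w - u‖ ≤ 2 * ‖h‖ := by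
      rw [ewu]
      calc ‖h - (P (x₀ + h) - P x₀)‖ ≤ ‖h‖ + ‖P (x₀ + h) - P x₀‖ := norm_sub_le _ _
        _ ≤ 2 * ‖h‖ := by linarith
    have e1 : ‖u + h‖ ^ 2 = ‖u‖ ^ 2 + 2 * ⟪u, h⟫ + ‖h‖ ^ 2 := norm_add_sq_real u h
    have e2 : ‖w - h‖ ^ 2 = ‖w‖ ^ 2 - 2 * ⟪w, h⟫ + ‖h‖ ^ 2 := norm_sub_sq_real w h
    have e3 : ⟪w, h⟫ = ⟪u, h⟫ + ⟪w - u, h⟫ := by simp only [hw, hu, inner_sub_left, inner_add_left]; ring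
    have e4 : |⟪w - u, h⟫| ≤ 2 * ‖h‖ ^ 2 := by
      calc |⟪w - u, h⟫| ≤ ‖w - u‖ * ‖h‖ := abs_real_inner_le_norm _ _
        _ ≤ 2 * ‖h‖ ^ 2 := by nlinarith [norm_nonneg h]
    have happ : ((2 : ℝ) • (innerSL ℝ u)) h = 2 * ⟪u, h⟫ := by
      simp [innerSL_apply_apply, real_inner_comm]
    rw [happ, Real.norm_eq_abs, abs_le]
    constructor
    · nlinarith [abs_le.mp e4]
    · nlinarith [abs_le.mp e4]
  rw [Asymptotics.isLittleO_iff]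
  intro c hc
  have hball : ∀ᶠ h : F in nhds 0, ‖h‖ < c / 5 := by
    filter_upwards [Metric.ball_mem_nhds (0 : F) (by positivity : (0:ℝ) < c / 5)] with h hh
    simpa [dist_zero_right] using hh
  filter_upwards [hball] with h hh
  calc ‖‖x₀ + h - P (x₀ + h)‖ ^ 2 - ‖x₀ - P x₀‖ ^ 2
        - ((2 : ℝ) • (innerSL ℝ (x₀ - P x₀))) h‖ ≤ 5 * ‖h‖ ^ 2 := key h
    _ ≤ c * ‖h‖ := by nlinarith [norm_nonneg h]

lemma lyapunov_bound {n : ℕ} (Q V W Pv : Fin n → F) (q₀ : F) (A : Fin n → Fin n → ℝ)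
    (hAsymm : ∀ i j, A i j = A j i)
    (astar : ℝ) (hA0 : ∀ i j, 0 ≤ A i j) (hA1 : ∀ i j, A i j ≤ astar)
    (k : ℝ) (hk : 2 + (n - 1 : ℝ) * astar / 2 < k)
    (hW : ∀ i, W i = -k • V i - (∑ j, A i j • (Q i - Q j)) - (Q i - Pv i))
    (hproj : ∀ i, ‖Q i - Pv i‖ ^ 2 ≤ ⟪Q i - q₀, Q i - Pv i⟫) :
    (1/2) * (∑ i, 2 * ⟪V i, W i⟫)
      + (∑ i, (⟪Q i - q₀, W i⟫ + ⟪V i, V i⟫))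
      + (k/2) * (∑ i, 2 * ⟪Q i - q₀, V i⟫)
      + (1/2) * (∑ i, 2 * ⟪Q i - Pv i, V i⟫)
    ≤ -(∑ i, ‖Q i - Pv i‖ ^ 2) - ∑ i, ‖V i‖ ^ 2 := by
  have key : ∀ i, ⟪V i, W i⟫ + (⟪Q i - q₀, W i⟫ + ⟪V i, V i⟫) + k * ⟪Q i - q₀, V i⟫
      + ⟪Q i - Pv i, V i⟫
      = (1 - k) * ‖V i‖ ^ 2 - (∑ j, A i j * ⟪V i, Q i - Q j⟫)
        - (∑ j, A i j * ⟪Q i - q₀, Q i - Q j⟫) - ⟪Q i - q₀, Q i - Pv i⟫ := by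
    intro i
    rw [hW i, real_inner_comm (V i) (Q i - Pv i)]
    simp only [inner_sub_right, real_inner_smul_right, inner_sum, real_inner_self_eq_norm_sq]
    ring
  have hLHS : (1/2) * (∑ i, 2 * ⟪V i, W i⟫) + (∑ i, (⟪Q i - q₀, W i⟫ + ⟪V i, V i⟫))
      + (k/2) * (∑ i, 2 * ⟪Q i - q₀, V i⟫) + (1/2) * (∑ i, 2 * ⟪Q i - Pv i, V i⟫)
      = ∑ i, ((1 - k) * ‖V i‖ ^ 2 - (∑ j, A i j * ⟪V i, Q i - Q j⟫)
        - (∑ j, A i j * ⟪Q i - q₀, Q i - Q j⟫) - ⟪Q i - q₀, Q i - Pv i⟫) := by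
    rw [Finset.mul_sum, Finset.mul_sum, Finset.mul_sum, ← Finset.sum_add_distrib,
      ← Finset.sum_add_distrib, ← Finset.sum_add_distrib]
    exact Finset.sum_congr rfl fun i _ => by linear_combination key i
  rw [hLHS]
  have hsym : (∑ i, ∑ j, A i j * ⟪Q i - q₀, Q i - Q j⟫)
      = (1/2) * ∑ i, ∑ j, A i j * ‖Q i - Q j‖ ^ 2 := by
    have hcomm : (∑ i, ∑ j, A i j * ⟪Q i - q₀, Q i - Q j⟫)
        = ∑ i, ∑ j, A j i * ⟪Q j - q₀, Q j - Q i⟫ := Finset.sum_comm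
    have hpt : ∀ i j : Fin n, A i j * ⟪Q i - q₀, Q i - Q j⟫ + A j i * ⟪Q j - q₀, Q j - Q i⟫
        = A i j * ‖Q i - Q j‖ ^ 2 := by
      intro i j
      rw [← hAsymm i j, ← real_inner_self_eq_norm_sq]
      have e1 : Q j - Q i = -(Q i - Q j) := by abel
      rw [e1, inner_neg_right]
      have e2 : ⟪Q i - q₀, Q i - Q j⟫ - ⟪Q j - q₀, Q i - Q j⟫ = ⟪Q i - Q j, Q i - Q j⟫ := by
        rw [← inner_sub_left]
        congr 1
        abel
      linear_combination (A i j) * e2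
    have h2 : 2 * (∑ i, ∑ j, A i j * ⟪Q i - q₀, Q i - Q j⟫)
        = ∑ i, ∑ j, A i j * ‖Q i - Q j‖ ^ 2 := by
      calc 2 * (∑ i, ∑ j, A i j * ⟪Q i - q₀, Q i - Q j⟫)
          = (∑ i, ∑ j, A i j * ⟪Q i - q₀, Q i - Q j⟫)
            + ∑ i, ∑ j, A j i * ⟪Q j - q₀, Q j - Q i⟫ := by rw [← hcomm]; ring
        _ = ∑ i, ∑ j, (A i j * ⟪Q i - q₀, Q i - Q j⟫ + A j i * ⟪Q j - q₀, Q j - Q i⟫) := by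
            rw [← Finset.sum_add_distrib]
            exact Finset.sum_congr rfl fun i _ => by rw [← Finset.sum_add_distrib]
        _ = ∑ i, ∑ j, A i j * ‖Q i - Q j‖ ^ 2 :=
            Finset.sum_congr rfl fun i _ => Finset.sum_congr rfl fun j _ => hpt i j
    linarith
  have hb1 : ∑ i, (-(∑ j, A i j * ⟪V i, Q i - Q j⟫) - (1/2) * ∑ j, A i j * ‖Q i - Q j‖ ^ 2)
      ≤ ∑ i, ((n : ℝ) - 1) * (astar / 2 * ‖V i‖ ^ 2) := by
    apply Finset.sum_le_sum
    intro i _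
    have hterm : ∀ j : Fin n, -(A i j * ⟪V i, Q i - Q j⟫) - (1/2) * (A i j * ‖Q i - Q j‖ ^ 2)
        ≤ (if j = i then 0 else astar / 2 * ‖V i‖ ^ 2) := by
      intro j
      by_cases hij : j = i
      · simp [hij]
      · rw [if_neg hij]
        have h1 : -⟪V i, Q i - Q j⟫ ≤ ‖V i‖ * ‖Q i - Q j‖ := by
          calc -⟪V i, Q i - Q j⟫ ≤ |⟪V i, Q i - Q j⟫| := neg_le_abs _
            _ ≤ ‖V i‖ * ‖Q i - Q j‖ := abs_real_inner_le_norm _ _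
        nlinarith [mul_le_mul_of_nonneg_left h1 (hA0 i j),
          mul_nonneg (hA0 i j) (sq_nonneg (‖V i‖ - ‖Q i - Q j‖)),
          mul_le_mul_of_nonneg_right (hA1 i j) (sq_nonneg (‖V i‖))]
    have hsum : ∑ j : Fin n, (if j = i then (0:ℝ) else astar / 2 * ‖V i‖ ^ 2)
        = ((n : ℝ) - 1) * (astar / 2 * ‖V i‖ ^ 2) := by
      have e : ∀ j : Fin n, (if j = i then (0:ℝ) else astar / 2 * ‖V i‖ ^ 2)
          = astar / 2 * ‖V i‖ ^ 2 - (if j = i then astar / 2 * ‖V i‖ ^ 2 else 0) := by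
        intro j; split <;> ring
      rw [Finset.sum_congr rfl fun j _ => e j, Finset.sum_sub_distrib, Finset.sum_const,
        Finset.sum_ite_eq' Finset.univ i fun _ => astar / 2 * ‖V i‖ ^ 2]
      simp [Finset.card_univ]
      ring
    calc -(∑ j, A i j * ⟪V i, Q i - Q j⟫) - (1/2) * ∑ j, A i j * ‖Q i - Q j‖ ^ 2
        = ∑ j, (-(A i j * ⟪V i, Q i - Q j⟫) - (1/2) * (A i j * ‖Q i - Q j‖ ^ 2)) := by
          rw [Finset.sum_sub_distrib]
          rw [Finset.mul_sum, Finset.sum_neg_distrib]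
      _ ≤ ∑ j : Fin n, (if j = i then (0:ℝ) else astar / 2 * ‖V i‖ ^ 2) :=
          Finset.sum_le_sum fun j _ => hterm j
      _ = ((n : ℝ) - 1) * (astar / 2 * ‖V i‖ ^ 2) := hsum
  have hsplit : ∑ i, ((1 - k) * ‖V i‖ ^ 2 - (∑ j, A i j * ⟪V i, Q i - Q j⟫)
        - (∑ j, A i j * ⟪Q i - q₀, Q i - Q j⟫) - ⟪Q i - q₀, Q i - Pv i⟫)
      = (∑ i, (1 - k) * ‖V i‖ ^ 2) - (∑ i, ∑ j, A i j * ⟪V i, Q i - Q j⟫)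
        - (∑ i, ∑ j, A i j * ⟪Q i - q₀, Q i - Q j⟫) - ∑ i, ⟪Q i - q₀, Q i - Pv i⟫ := by
    rw [Finset.sum_sub_distrib, Finset.sum_sub_distrib, Finset.sum_sub_distrib]
  rw [hsplit, hsym]
  have hS3 : (∑ i, ‖Q i - Pv i‖ ^ 2) ≤ ∑ i, ⟪Q i - q₀, Q i - Pv i⟫ :=
    Finset.sum_le_sum fun i _ => hproj i
  have hmerge : (∑ i, (1 - k) * ‖V i‖ ^ 2) + ∑ i, ((n : ℝ) - 1) * (astar / 2 * ‖V i‖ ^ 2)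
      ≤ ∑ i, -(‖V i‖ ^ 2) := by
    rw [← Finset.sum_add_distrib]
    refine Finset.sum_le_sum fun i _ => ?_
    nlinarith [sq_nonneg (‖V i‖)]
  have hneg : (∑ i, -(‖V i‖ ^ 2)) = -∑ i, ‖V i‖ ^ 2 := by
    rw [Finset.sum_neg_distrib]
  have hb1' : -(∑ i, ∑ j, A i j * ⟪V i, Q i - Q j⟫)
      - (1/2) * ∑ i, ∑ j, A i j * ‖Q i - Q j‖ ^ 2
      ≤ ∑ i, ((n : ℝ) - 1) * (astar / 2 * ‖V i‖ ^ 2) := by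
    have e : -(∑ i, ∑ j, A i j * ⟪V i, Q i - Q j⟫)
        - (1/2) * ∑ i, ∑ j, A i j * ‖Q i - Q j‖ ^ 2
        = ∑ i, (-(∑ j, A i j * ⟪V i, Q i - Q j⟫)
          - (1/2) * ∑ j, A i j * ‖Q i - Q j‖ ^ 2) := by
      rw [Finset.sum_sub_distrib, Finset.sum_neg_distrib, Finset.mul_sum]
    rw [e]; exact hb1
  linarith


/-- Along every C² solution of the switching closed loop
`q̈ᵢ = -k q̇ᵢ - ∑ⱼ aᵢⱼ(t)(qᵢ - qⱼ) - (qᵢ - P_{Xᵢ}(qᵢ))` with `k > 2 + (n-1)a*/2`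
and `q₀ ∈ X₀`, the Lyapunov function
`V = (1/2)∑ᵢ‖q̇ᵢ‖² + ∑ᵢ⟨qᵢ - q₀, q̇ᵢ⟩ + (k/2)∑ᵢ‖qᵢ - q₀‖² + (1/2)∑ᵢ‖qᵢ - P_{Xᵢ}(qᵢ)‖²`
satisfies `dV/dt ≤ -∑ᵢ ‖qᵢ‖²_{Xᵢ} - ∑ᵢ ‖q̇ᵢ‖² ≤ 0` at every time. -/
theorem statement16
    (m n : ℕ)
    (X : Fin n → Set (EuclideanSpace ℝ (Fin m)))
    (hXclosed : ∀ i, IsClosed (X i))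
    (hXconvex : ∀ i, Convex ℝ (X i))
    (q₀ : EuclideanSpace ℝ (Fin m)) (hq₀ : q₀ ∈ ⋂ i, X i)
    (P : Fin n → EuclideanSpace ℝ (Fin m) → EuclideanSpace ℝ (Fin m))
    (hPmem : ∀ i x, P i x ∈ X i)
    (hPproj : ∀ i x, ∀ y ∈ X i, ‖x - P i x‖ ≤ ‖x - y‖)
    (a : Fin n → Fin n → ℝ → ℝ)
    (hmeas : ∀ i j, Measurable (a i j))
    (ha_symm : ∀ i j t, a i j t = a j i t)
    (astar : ℝ)
    (hbound : ∀ i j t, 0 ≤ a i j t ∧ a i j t ≤ astar)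
    (k : ℝ) (hk : 2 + (n - 1 : ℝ) * astar / 2 < k)
    (q : Fin n → ℝ → EuclideanSpace ℝ (Fin m))
    (hq : ∀ i, ContDiff ℝ 2 (q i))
    (hODE : ∀ i t,
      deriv (deriv (q i)) t
        = -k • deriv (q i) t - (∑ j, a i j t • (q i t - q j t))
          - (q i t - P i (q i t))) :
    ∀ t : ℝ, ∃ d : ℝ,
      HasDerivAt (fun s =>
          (1 / 2) * ∑ i, ‖deriv (q i) s‖ ^ 2
          + ∑ i, ⟪q i s - q₀, deriv (q i) s⟫
          + (k / 2) * ∑ i, ‖q i s - q₀‖ ^ 2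
          + (1 / 2) * ∑ i, ‖q i s - P i (q i s)‖ ^ 2) d t ∧
      d ≤ -(∑ i, Metric.infDist (q i t) (X i) ^ 2) - ∑ i, ‖deriv (q i) t‖ ^ 2 ∧
      -(∑ i, Metric.infDist (q i t) (X i) ^ 2) - ∑ i, ‖deriv (q i) t‖ ^ 2 ≤ 0 := by
  intro t
  have hq0i : ∀ i, q₀ ∈ X i := fun i => Set.mem_iInter.mp hq₀ i
  have hdq : ∀ i, Differentiable ℝ (q i) := fun i => (hq i).differentiable (by norm_num)
  have hdq2 : ∀ i, Differentiable ℝ (deriv (q i)) := by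
    intro i
    have h2 : ContDiff ℝ ((1 : ℕ) + 1) (q i) := by exact_mod_cast hq i
    exact ((contDiff_succ_iff_deriv.mp h2).2.2).differentiable (by norm_num)
  have hv : ∀ i, HasDerivAt (q i) (deriv (q i) t) t := fun i => ((hdq i) t).hasDerivAt
  have hw : ∀ i, HasDerivAt (deriv (q i)) (deriv (deriv (q i)) t) t :=
    fun i => ((hdq2 i) t).hasDerivAt
  -- derivative of each summand
  have hA : ∀ i, HasDerivAt (fun s => ‖deriv (q i) s‖ ^ 2)
      (2 * ⟪deriv (q i) t, deriv (deriv (q i)) t⟫) t := by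
    intro i
    have h := (hw i).inner ℝ (hw i)
    simp only [real_inner_self_eq_norm_sq] at h
    refine h.congr_deriv ?_
    rw [real_inner_comm]
    ring
  have hB : ∀ i, HasDerivAt (fun s => ⟪q i s - q₀, deriv (q i) s⟫)
      (⟪q i t - q₀, deriv (deriv (q i)) t⟫ + ⟪deriv (q i) t, deriv (q i) t⟫) t := by
    intro i
    exact ((hv i).sub_const q₀).inner ℝ (hw i)
  have hC : ∀ i, HasDerivAt (fun s => ‖q i s - q₀‖ ^ 2)
      (2 * ⟪q i t - q₀, deriv (q i) t⟫) t := by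
    intro i
    have h := ((hv i).sub_const q₀).inner ℝ ((hv i).sub_const q₀)
    simp only [real_inner_self_eq_norm_sq] at h
    refine h.congr_deriv ?_
    rw [real_inner_comm]
    ring
  have hD : ∀ i, HasDerivAt (fun s => ‖q i s - P i (q i s)‖ ^ 2)
      (2 * ⟪q i t - P i (q i t), deriv (q i) t⟫) t := by
    intro i
    have hF := hasFDerivAt_sq_dist_proj (hXconvex i) (P i) (hPmem i) (hPproj i) (q i t)
    have h := hF.comp_hasDerivAt t (hv i)
    exact h.congr_deriv (by simp [innerSL_apply_apply, inner_sub_left])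
  have hV : HasDerivAt (fun s =>
      (1 / 2) * ∑ i, ‖deriv (q i) s‖ ^ 2
      + ∑ i, ⟪q i s - q₀, deriv (q i) s⟫
      + (k / 2) * ∑ i, ‖q i s - q₀‖ ^ 2
      + (1 / 2) * ∑ i, ‖q i s - P i (q i s)‖ ^ 2)
      ((1/2) * (∑ i, 2 * ⟪deriv (q i) t, deriv (deriv (q i)) t⟫)
        + (∑ i, (⟪q i t - q₀, deriv (deriv (q i)) t⟫ + ⟪deriv (q i) t, deriv (q i) t⟫))
        + (k/2) * (∑ i, 2 * ⟪q i t - q₀, deriv (q i) t⟫)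
        + (1/2) * (∑ i, 2 * ⟪q i t - P i (q i t), deriv (q i) t⟫)) t := by
    exact ((((HasDerivAt.fun_sum fun i _ => hA i).const_mul (1/2 : ℝ)).add
        (HasDerivAt.fun_sum fun i _ => hB i)).add
        ((HasDerivAt.fun_sum fun i _ => hC i).const_mul (k/2 : ℝ))).add
        ((HasDerivAt.fun_sum fun i _ => hD i).const_mul (1/2 : ℝ))
  refine ⟨_, hV, ?_, ?_⟩
  · have hbd := lyapunov_bound (fun i => q i t) (fun i => deriv (q i) t)
      (fun i => deriv (deriv (q i)) t) (fun i => P i (q i t)) q₀ (fun i j => a i j t)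
      (fun i j => ha_symm i j t) astar (fun i j => (hbound i j t).1)
      (fun i j => (hbound i j t).2) k hk (fun i => hODE i t) ?_
    · have heq : ∀ i, ‖q i t - P i (q i t)‖ = Metric.infDist (q i t) (X i) :=
        fun i => proj_norm_eq_infDist (hPmem i (q i t)) (hPproj i (q i t))
      calc (1/2) * (∑ i, 2 * ⟪deriv (q i) t, deriv (deriv (q i)) t⟫)
            + (∑ i, (⟪q i t - q₀, deriv (deriv (q i)) t⟫ + ⟪deriv (q i) t, deriv (q i) t⟫))
            + (k/2) * (∑ i, 2 * ⟪q i t - q₀, deriv (q i) t⟫)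
            + (1/2) * (∑ i, 2 * ⟪q i t - P i (q i t), deriv (q i) t⟫)
          ≤ -(∑ i, ‖q i t - P i (q i t)‖ ^ 2) - ∑ i, ‖deriv (q i) t‖ ^ 2 := hbd
        _ = -(∑ i, Metric.infDist (q i t) (X i) ^ 2) - ∑ i, ‖deriv (q i) t‖ ^ 2 := by
            rw [Finset.sum_congr rfl fun i _ => by rw [heq i]]
    · intro i
      have hvar := proj_varineq (hXconvex i) (hPmem i (q i t)) (hPproj i (q i t)) q₀ (hq0i i)
      have e : ⟪q i t - q₀, q i t - P i (q i t)⟫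
          = ‖q i t - P i (q i t)‖ ^ 2 - ⟪q i t - P i (q i t), q₀ - P i (q i t)⟫ := by
        rw [← real_inner_self_eq_norm_sq]
        simp only [inner_sub_left, inner_sub_right]
        have c1 := real_inner_comm (q i t) (P i (q i t))
        have c2 := real_inner_comm (q i t) q₀
        have c3 := real_inner_comm (P i (q i t)) q₀
        ring_nf
        linarith [c1, c2, c3]
      rw [e]
      linarith
  · have h1 : (0:ℝ) ≤ ∑ i, Metric.infDist (q i t) (X i) ^ 2 :=
      Finset.sum_nonneg fun i _ => sq_nonneg _
    have h2 : (0:ℝ) ≤ ∑ i, ‖deriv (q i) t‖ ^ 2 :=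
      Finset.sum_nonneg fun i _ => sq_nonneg _
    linarith
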